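/- arXiv:1110.4975 — 4 statements merged into one kernel-verified Lean document; each statement's English description precedes it below -/
import Mathlib

section
/- Let Γ be a connected regular graph on vertex set X with adjacency matrix A having distinct eigenvalues θ₀ > θ₁ > ⋯ > θ_d with multiplicities m₀, m₁, …, m_d, and let p_d be the d-th predistance polynomial of Γ. Then for each i ∈ {1,…,d}, ∏_{j=1, j≠i}^d (θ₀ − θ_j)/(θ_i − θ_j) = − m_i · p_d(θ_i) / p_d(θ₀). -/
/-!
Orthogonality of `p_d` to `h_i(t) = ∏_{j ≠ 0, i} (t - θ_j)`, which has degree `d - 1` and vanishes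
at every eigenvalue except `θ₀` and `θ_i`, gives `m₀ p(θ₀) h_i(θ₀) + m_i p(θ_i) h_i(θ_i) = 0`.
Two facts turn this into the claim. First `m₀ = 1`: for a `k`-regular graph `A = k - L` with `L`
the Laplacian, which is positive semidefinite with nullity the number of connected components,
so `θ₀ = k` is a simple eigenvalue. Second `p(θ₀) ≠ 0`: otherwise `⟨p, p⟩ = p(θ₀) = 0` makes `p`
vanish at all `d + 1` eigenvalues, impossible in degree `d`.
-/

open Polynomial Finset

section ProdXSubC

variable {R ι κ : Type*} [CommRing R] [IsDomain R] [Fintype ι] [Fintype κ]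

theorem card_eq_of_prod_X_sub_C_pow_eq [DecidableEq R] {θ : ι → R} (hθ : Function.Injective θ)
    {m : ι → ℕ} {μ : κ → R} (h : ∏ i, (X - C (θ i)) ^ m i = ∏ v, (X - C (μ v))) (i : ι) :
    #{v | μ v = θ i} = m i := by
  classical
  have hcount := congrArg (fun p => p.roots.count (θ i)) h
  rw [roots_prod _ _ (monic_prod_of_monic _ _ fun j _ => (monic_X_sub_C _).pow _).ne_zero,
    roots_prod _ _ (monic_prod_of_monic _ _ fun j _ => monic_X_sub_C _).ne_zero] at hcount
  simp only [Multiset.count_bind] at hcount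
  rw [← Finset.sum_eq_multiset_sum, ← Finset.sum_eq_multiset_sum] at hcount
  simp only [roots_pow, roots_X_sub_C, Multiset.count_nsmul, Multiset.count_singleton, mul_ite,
    mul_one, mul_zero, hθ.eq_iff, Finset.sum_ite_eq, mem_univ, if_true, Finset.sum_boole] at hcount
  simpa [eq_comm] using hcount.symm

theorem exists_eq_of_prod_X_sub_C_pow_eq {θ : ι → R} {m : ι → ℕ} {μ : κ → R}
    (h : ∏ i, (X - C (θ i)) ^ m i = ∏ v, (X - C (μ v))) (v : κ) :
    ∃ i, μ v = θ i := by
  have heval := congrArg (eval (μ v)) h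
  simp only [eval_prod, eval_pow, eval_sub, eval_X, eval_C] at heval
  rw [prod_eq_zero (mem_univ v) (sub_self _)] at heval
  obtain ⟨i, -, hi⟩ := prod_eq_zero_iff.1 heval
  exact ⟨i, sub_eq_zero.1 (eq_zero_of_pow_eq_zero hi)⟩

end ProdXSubC

namespace SimpleGraph

variable {V : Type*} [Fintype V] [DecidableEq V] {G : SimpleGraph V} [DecidableRel G.Adj]

theorem Connected.card_connectedComponent_eq_one (hconn : G.Connected) :
    Fintype.card G.ConnectedComponent = 1 :=
  have := hconn.nonempty
  le_antisymm
    (Fintype.card_le_one_iff_subsingleton.2 hconn.preconnected.subsingleton_connectedComponent)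
    Fintype.card_pos

variable (G) in
theorem card_lapMatrix_eigenvalues_eq_zero :
    #{v | (G.isHermitian_lapMatrix (R := ℝ)).eigenvalues v = 0} =
      Fintype.card G.ConnectedComponent := by
  set e := (G.isHermitian_lapMatrix (R := ℝ)).eigenvalues
  have hrank : Module.finrank ℝ (LinearMap.range (G.lapMatrix ℝ).toLin') = #{v | ¬e v = 0} := by
    rw [← Fintype.card_subtype]
    exact (G.isHermitian_lapMatrix (R := ℝ)).rank_eq_card_non_zero_eigs
  have hnullity := LinearMap.finrank_range_add_finrank_ker (G.lapMatrix ℝ).toLin'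
  have hsplit := card_filter_add_card_filter_not (s := univ) (fun v => e v = 0)
  rw [Module.finrank_fintype_fun_eq_card, hrank] at hnullity
  rw [card_connectedComponent_eq_finrank_ker_toLin'_lapMatrix]
  rw [card_univ] at hsplit
  omega

theorem IsRegularOfDegree.lapMatrix_eq {R : Type*} [Ring R] {k : ℕ}
    (hreg : G.IsRegularOfDegree k) : G.lapMatrix R = k - G.adjMatrix R := by
  ext v w
  simp [lapMatrix, degMatrix, hreg v, Matrix.diagonal_apply, Matrix.natCast_apply]

theorem IsRegularOfDegree.charpoly_adjMatrix {k : ℕ} (hreg : G.IsRegularOfDegree k) :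
    (G.adjMatrix ℝ).charpoly =
      ∏ v, (X - C (k - (G.isHermitian_lapMatrix (R := ℝ)).eigenvalues v)) := by
  have hL : IsSelfAdjoint (G.lapMatrix ℝ) := G.isHermitian_lapMatrix (R := ℝ)
  have hcfc : G.adjMatrix ℝ = cfc (fun t => (k : ℝ) - t) (G.lapMatrix ℝ) := by
    rw [cfc_sub (fun _ => (k : ℝ)) (fun t => t) (G.lapMatrix ℝ), cfc_const _ _ hL, cfc_id' ℝ _ hL,
      hreg.lapMatrix_eq, map_natCast, sub_sub_cancel]
  rw [hcfc, (G.isHermitian_lapMatrix (R := ℝ)).charpoly_cfc_eq]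
  rfl

theorem Connected.mult_zero_eq_one_of_charpoly_adjMatrix_eq {k d : ℕ} (hconn : G.Connected)
    (hreg : G.IsRegularOfDegree k)
    {θ : Fin (d + 1) → ℝ} {m : Fin (d + 1) → ℕ} (hθ : StrictAnti θ) (hm : ∀ i, 0 < m i)
    (hspec : (G.adjMatrix ℝ).charpoly = ∏ i, (X - C (θ i)) ^ m i) :
    m 0 = 1 := by
  set e := (G.isHermitian_lapMatrix (R := ℝ)).eigenvalues
  have hchar := hspec.symm.trans hreg.charpoly_adjMatrix
  have hcount := card_eq_of_prod_X_sub_C_pow_eq hθ.injective hchar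
  have hzero : #{v | e v = 0} = 1 := by
    rw [card_lapMatrix_eigenvalues_eq_zero, hconn.card_connectedComponent_eq_one]
  -- `θ 0` is the largest of the roots `k - e v`, all `≤ k` since `L` is positive semidefinite,
  -- and `k` itself is one of them.
  have hθ₀ : θ 0 = k := by
    obtain ⟨v₀, hv₀⟩ := card_pos.1 (hzero ▸ one_pos : 0 < #{v | e v = 0})
    obtain ⟨j, hj⟩ := exists_eq_of_prod_X_sub_C_pow_eq hchar v₀
    obtain ⟨v, hv⟩ := card_pos.1 ((hcount 0).symm ▸ hm 0)
    rw [mem_filter] at hv₀ hv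
    have := (G.posSemidef_lapMatrix ℝ).eigenvalues_nonneg v
    linarith [hθ.antitone (Fin.zero_le j)]
  rw [← hcount 0]
  simpa [hθ₀] using hzero

end SimpleGraph

section Orthogonality

variable {ι : Type*} [Fintype ι]

theorem eval_ne_zero_of_sum_mul_eval_sq_eq {θ : ι → ℝ} (hθ : Function.Injective θ) {w : ι → ℝ}
    (hw : ∀ i, 0 < w i) {p : ℝ[X]} (hp : p ≠ 0) (hdeg : p.natDegree < Fintype.card ι) {c : ℝ}
    {i₀ : ι} (hnorm : ∑ i, w i * p.eval (θ i) ^ 2 = c * p.eval (θ i₀)) : p.eval (θ i₀) ≠ 0 := by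
  intro h₀
  rw [h₀, mul_zero, sum_eq_zero_iff_of_nonneg fun i _ => by have := hw i; positivity] at hnorm
  refine hp (eq_zero_of_natDegree_lt_card_of_eval_eq_zero p hθ (fun i => ?_) hdeg)
  simpa [(hw i).ne'] using hnorm i (mem_univ i)

theorem sum_mul_eval_prod_erase_erase {R : Type*} [CommRing R] [DecidableEq ι] (θ : ι → R)
    (w : ι → R) {a b : ι} (hab : a ≠ b) :
    ∑ j, w j * (∏ s ∈ (univ.erase a).erase b, (X - C (θ s))).eval (θ j) =
      w a * ∏ s ∈ (univ.erase a).erase b, (θ a - θ s) +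
        w b * ∏ s ∈ (univ.erase a).erase b, (θ b - θ s) := by
  simp only [eval_prod, eval_sub, eval_X, eval_C]
  refine Fintype.sum_eq_add a b hab fun j ⟨hja, hjb⟩ => ?_
  rw [prod_eq_zero (mem_erase.2 ⟨hjb, mem_erase.2 ⟨hja, mem_univ j⟩⟩) (sub_self _), mul_zero]

end Orthogonality

theorem stmt1_general {V : Type*} [Fintype V] [DecidableEq V]
    (G : SimpleGraph V) [DecidableRel G.Adj] (k d : ℕ)
    (hconn : G.Connected) (hreg : G.IsRegularOfDegree k)
    (θ : Fin (d + 1) → ℝ) (m : Fin (d + 1) → ℕ)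
    (hθ : StrictAnti θ) (hm : ∀ i, 0 < m i)
    (hspec : (G.adjMatrix ℝ).charpoly = ∏ i, (X - C (θ i)) ^ m i)
    (p : Polynomial ℝ) (hpdeg : p.natDegree = d)
    (horth : ∀ q : Polynomial ℝ, q.natDegree < d →
      ∑ i, (m i : ℝ) * p.eval (θ i) * q.eval (θ i) = 0)
    (hnorm : ∑ i, (m i : ℝ) * p.eval (θ i) ^ 2 = (Fintype.card V : ℝ) * p.eval (θ 0))
    (i : Fin (d + 1)) (hi : i ≠ 0) :
    ∏ j ∈ (Finset.univ.erase 0).erase i, (θ 0 - θ j) / (θ i - θ j) =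
      - (m i : ℝ) * p.eval (θ i) / p.eval (θ 0) := by
  have hm₀ : m 0 = 1 := hconn.mult_zero_eq_one_of_charpoly_adjMatrix_eq hreg hθ hm hspec
  have hd : 0 < d := by omega
  have hp : p ≠ 0 := by rintro rfl; simp at hpdeg; omega
  have hp₀ : p.eval (θ 0) ≠ 0 := eval_ne_zero_of_sum_mul_eval_sq_eq hθ.injective
    (fun j => Nat.cast_pos.2 (hm j)) hp (by simp [hpdeg]) hnorm
  have hcard : #((univ.erase 0).erase i) = d - 1 := by
    rw [card_erase_of_mem (mem_erase.2 ⟨hi, mem_univ i⟩), card_erase_of_mem (mem_univ 0)]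
    simp
  have hkey := (sum_mul_eval_prod_erase_erase θ (fun j => (m j : ℝ) * p.eval (θ j))
    (Ne.symm hi)).symm.trans (horth _ (by simp [hcard]; omega))
  have hden : ∏ j ∈ (univ.erase 0).erase i, (θ i - θ j) ≠ 0 :=
    prod_ne_zero_iff.2 fun j hj => sub_ne_zero.2 (hθ.injective.ne (mem_erase.1 hj).1.symm)
  rw [hm₀, Nat.cast_one, one_mul] at hkey
  rw [prod_div_distrib, div_eq_div_iff hden hp₀]
  linear_combination hkey

/-- Spectral excess identity: let `G` be a connected regular graph with strictly
decreasing distinct eigenvalues `θ₀ > ⋯ > θ_d` of multiplicities `m i` (encoded by the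
characteristic polynomial of the adjacency matrix), and let `p` be the `d`-th predistance
polynomial (degree `d`, orthogonal to all polynomials of lower degree for the spectral
inner product, with `⟨p,p⟩ = p(θ₀)`). Then for each `i ∈ {1,…,d}`,
`∏_{j=1, j≠i}^d (θ₀ − θ_j)/(θ_i − θ_j) = − m_i p(θ_i)/p(θ₀)`. -/
theorem stmt1 {V : Type*} [Fintype V] [DecidableEq V]
    (G : SimpleGraph V) [DecidableRel G.Adj] (k d : ℕ) (hd : 1 ≤ d)
    (hconn : G.Connected) (hreg : G.IsRegularOfDegree k)
    (θ : Fin (d + 1) → ℝ) (m : Fin (d + 1) → ℕ)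
    (hθ : StrictAnti θ) (hm : ∀ i, 0 < m i)
    (hspec : (G.adjMatrix ℝ).charpoly = ∏ i, (X - C (θ i)) ^ m i)
    (p : Polynomial ℝ) (hpdeg : p.natDegree = d)
    (horth : ∀ q : Polynomial ℝ, q.natDegree < d →
      ∑ i, (m i : ℝ) * p.eval (θ i) * q.eval (θ i) = 0)
    (hnorm : ∑ i, (m i : ℝ) * p.eval (θ i) ^ 2 = (Fintype.card V : ℝ) * p.eval (θ 0))
    (i : Fin (d + 1)) (hi : i ≠ 0) :
    ∏ j ∈ (Finset.univ.erase 0).erase i, (θ 0 - θ j) / (θ i - θ j) =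
      - (m i : ℝ) * p.eval (θ i) / p.eval (θ 0) :=
  stmt1_general G k d hconn hreg θ m hθ hm hspec p hpdeg horth hnorm i hi
end

section
/- Let 𝔛 be a symmetric P-polynomial association scheme of class d with respect to the ordering A₀, A₁, …, A_d, with pairwise distinct eigenvalues θ₀, …, θ_d of A₁ and second eigenmatrix Q. Then for each i ∈ {1,…,d}, ∏_{j=1, j≠i}^d (θ₀ − θ_j)/(θ_i − θ_j) = − Q_i(d). -/
open Matrix BigOperators

/-- A symmetric association scheme of class `d` on a finite set `X`, bundled with
its adjacency matrices `A i`, primitive idempotents `E i`, and first and second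
eigenmatrices `P`, `Q` (with `P i j = P_i(j)`, `Q i j = Q_i(j)`). -/
structure AssocScheme (X : Type*) [Fintype X] [DecidableEq X] (d : ℕ) where
  A : Fin (d + 1) → Matrix X X ℝ
  E : Fin (d + 1) → Matrix X X ℝ
  P : Fin (d + 1) → Fin (d + 1) → ℝ
  Q : Fin (d + 1) → Fin (d + 1) → ℝ
  A_entries : ∀ i x y, A i x y = 0 ∨ A i x y = 1
  A_zero : A 0 = 1
  A_ne : ∀ i, A i ≠ 0
  A_sum : ∑ i, A i = Matrix.of fun _ _ => (1 : ℝ)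
  A_symm : ∀ i, (A i)ᵀ = A i
  A_mul : ∀ i j, ∃ p : Fin (d + 1) → ℝ, A i * A j = ∑ k, p k • A k
  E_zero : E 0 = ((Fintype.card X : ℝ))⁻¹ • Matrix.of fun _ _ => (1 : ℝ)
  E_sum : ∑ i, E i = 1
  E_mul : ∀ i j, E i * E j = if i = j then E i else 0
  E_symm : ∀ i, (E i)ᵀ = E i
  A_eq : ∀ i, A i = ∑ j, P i j • E j
  E_eq : ∀ i, E i = ((Fintype.card X : ℝ))⁻¹ • ∑ j, Q i j • A j

namespace AssocScheme

variable {V : Type*} [Fintype V] [DecidableEq V] {d : ℕ} (S : AssocScheme V d)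

/-- The eigenvalues `θ_j = P_1(j)` of the first adjacency matrix. -/
def theta (j : Fin (d + 1)) : ℝ := S.P 1 j

/-- `A j` appears in `M` if `M ∘ A j = α • A j` for some nonzero `α`. -/
def Appears (M : Matrix V V ℝ) (j : Fin (d + 1)) : Prop :=
  ∃ α : ℝ, α ≠ 0 ∧ Matrix.hadamard M (S.A j) = α • S.A j

/-- `N*_h`: indices `j` such that `A j` appears in `A₁^h` but in no lower power. -/
def Nstar (h : ℕ) : Set (Fin (d + 1)) :=
  {j | S.Appears (S.A 1 ^ h) j ∧ ∀ l < h, ¬ S.Appears (S.A 1 ^ l) j}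

/-- `S` is a P-polynomial scheme with respect to `A 1`: there is an ordering
`A 0, A 1, A (ξ 2), …, A (ξ d)` and polynomials `v i` of degree `i` with
`v i (A 1) = A (ξ i)`. -/
def IsPPolyWrtA1 : Prop :=
  ∃ ξ : Equiv.Perm (Fin (d + 1)), ξ 0 = 0 ∧ ξ 1 = 1 ∧
    ∃ v : Fin (d + 1) → Polynomial ℝ,
      ∀ i, (v i).natDegree = (i : ℕ) ∧ Polynomial.aeval (S.A 1) (v i) = S.A (ξ i)

end AssocScheme

open Polynomial Finset

/-! The Lagrange polynomial `M*_i = ∏_{j ≠ 0, i} (X - θ_j) / (θ_i - θ_j)` has degree `d - 1`, so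
by the P-polynomial property `M*_i(A₁)` is a linear combination of `A₀, …, A_{d-1}` and vanishes
at every entry `(x, y)` where `A_d` is `1`. Spectrally `M*_i(A₁) = M*_i(θ₀) E₀ + E_i`, whose
`(x, y)` entry is `(M*_i(θ₀) + Q_i(d)) / |V|` since `Q_0(d) = 1`. -/

theorem Polynomial.aeval_mul_of_mul_eq_smul {R A : Type*} [CommRing R] [Ring A]
    [Algebra R A] {a x : A} {r : R} (h : a * x = r • x) (p : R[X]) :
    aeval a p * x = p.eval r • x := by
  have := Module.End.aeval_apply_of_mem_apply_eq_smul
    (f := (LinearMap.mulLeft R a : Module.End R A)) (x := x) (μ := r) (p := p) h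
  rwa [show LinearMap.mulLeft R a = Algebra.lmul R A a from rfl,
    Polynomial.aeval_algHom_apply] at this

theorem CompleteOrthogonalIdempotents.aeval_sum_smul {R A ι : Type*} [CommRing R]
    [Ring A] [Algebra R A] [Fintype ι] {e : ι → A} (he : CompleteOrthogonalIdempotents e)
    (θ : ι → R) (p : R[X]) :
    aeval (∑ j, θ j • e j) p = ∑ j, p.eval (θ j) • e j := by
  classical
  have heig : ∀ k, (∑ j, θ j • e j) * e k = θ k • e k := fun k => by
    simp_rw [Finset.sum_mul, smul_mul_assoc, he.mul_eq, smul_ite, smul_zero,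
      Finset.sum_ite_eq', Finset.mem_univ, if_true]
  calc aeval (∑ j, θ j • e j) p = ∑ k, aeval (∑ j, θ j • e j) p * e k := by
        rw [← Finset.mul_sum, he.complete, mul_one]
    _ = ∑ k, p.eval (θ k) • e k :=
        Finset.sum_congr rfl fun k _ => aeval_mul_of_mul_eq_smul (heig k) p

theorem Polynomial.span_range_eq_degreeLT {K : Type*} [Field K] {n : ℕ} (v : Fin n → K[X])
    (hv : ∀ i, (v i).degree = i) : Submodule.span K (Set.range v) = degreeLT K n := by
  let s : Polynomial.Sequence K :=
    { elems' := fun k => if h : k < n then v ⟨k, h⟩ else X ^ k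
      degree_eq' := fun k => by split <;> [exact hv _; exact degree_X_pow k] }
  have hs : s '' Set.Iio n = Set.range v := by
    ext q
    refine ⟨fun ⟨k, hk, hq⟩ => ⟨⟨k, hk⟩, by simpa [s, Set.mem_Iio.mp hk] using hq⟩,
      fun ⟨k, hq⟩ => ⟨k, k.2, by simpa [s] using hq⟩⟩
  rw [← hs]
  exact s.span_degreeLT fun k _ => (s.ne_zero k |> leadingCoeff_ne_zero.mpr).isUnit

theorem Lagrange.eval_basis {F ι : Type*} [Field F] [DecidableEq ι] (s : Finset ι)
    (v : ι → F) (i : ι) (x : F) :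
    (Lagrange.basis s v i).eval x = ∏ j ∈ s.erase i, (x - v j) / (v i - v j) := by
  simp [Lagrange.basis, eval_prod, basisDivisor, div_eq_inv_mul]

namespace AssocScheme

variable {V : Type*} [Fintype V] [DecidableEq V] {d : ℕ} (S : AssocScheme V d)

theorem completeOrthogonalIdempotents_E : CompleteOrthogonalIdempotents S.E where
  idem i := by simpa [IsIdempotentElem] using S.E_mul i i
  ortho i j hij := by simpa [hij] using S.E_mul i j
  complete := S.E_sum

theorem exists_A_apply_eq_ite (k : Fin (d + 1)) :
    ∃ x y : V, ∀ l, S.A l x y = if l = k then 1 else 0 := by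
  obtain ⟨x, y, hxy⟩ : ∃ x y, S.A k x y ≠ 0 := by
    by_contra! h
    exact S.A_ne k (Matrix.ext h)
  have hk : S.A k x y = 1 := (S.A_entries k x y).resolve_left hxy
  have hsum : ∑ l, S.A l x y = 1 := by
    simpa [Matrix.sum_apply] using congrFun (congrFun S.A_sum x) y
  have hnonneg : ∀ l ∈ univ, 0 ≤ S.A l x y := fun l _ => by
    rcases S.A_entries l x y with h | h <;> simp [h]
  have hrest : ∑ l ∈ univ.erase k, S.A l x y = 0 := by
    linarith [add_sum_erase univ (fun l => S.A l x y) (mem_univ k)]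
  refine ⟨x, y, fun l => ?_⟩
  split_ifs with hl
  · rwa [hl]
  · exact (sum_eq_zero_iff_of_nonneg fun l hl => hnonneg l (mem_of_mem_erase hl)).mp hrest l
      (mem_erase.mpr ⟨hl, mem_univ l⟩)

theorem E_apply_of_A_apply_eq_ite {x y : V} {k : Fin (d + 1)}
    (hxy : ∀ l, S.A l x y = if l = k then 1 else 0) (i : Fin (d + 1)) :
    S.E i x y = (Fintype.card V : ℝ)⁻¹ * S.Q i k := by
  simp [S.E_eq i, Matrix.sum_apply, hxy]

theorem Q_zero (k : Fin (d + 1)) : S.Q 0 k = 1 := by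
  obtain ⟨x, y, hxy⟩ := S.exists_A_apply_eq_ite k
  have : Nonempty V := ⟨x⟩
  have hcard : (Fintype.card V : ℝ) ≠ 0 := Nat.cast_ne_zero.mpr Fintype.card_ne_zero
  simpa [S.E_zero, hcard, eq_comm] using S.E_apply_of_A_apply_eq_ite hxy 0

theorem aeval_A_one (p : ℝ[X]) : aeval (S.A 1) p = ∑ j, p.eval (S.theta j) • S.E j := by
  rw [S.A_eq 1]
  exact S.completeOrthogonalIdempotents_E.aeval_sum_smul _ p

theorem aeval_A_one_apply_of_A_apply_eq_ite {x y : V} {k : Fin (d + 1)}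
    (hxy : ∀ l, S.A l x y = if l = k then 1 else 0) (p : ℝ[X]) :
    aeval (S.A 1) p x y = (Fintype.card V : ℝ)⁻¹ * ∑ j, p.eval (S.theta j) * S.Q j k := by
  simp [S.aeval_A_one, Matrix.sum_apply, S.E_apply_of_A_apply_eq_ite hxy, mul_sum, mul_left_comm]

theorem aeval_A_one_apply_eq_zero_of_mem_degreeLT (v : Fin (d + 1) → ℝ[X])
    (hv : ∀ i, (v i).natDegree = (i : ℕ) ∧ aeval (S.A 1) (v i) = S.A i) {x y : V}
    (hxy : ∀ l, S.A l x y = if l = Fin.last d then 1 else 0) {p : ℝ[X]}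
    (hp : p ∈ degreeLT ℝ d) : aeval (S.A 1) p x y = 0 := by
  have hdeg : ∀ i : Fin d, (v i.castSucc).degree = (i : ℕ) := fun i => by
    have hne : v i.castSucc ≠ 0 := fun h => S.A_ne i.castSucc (by rw [← (hv _).2, h, map_zero])
    rw [degree_eq_natDegree hne, (hv _).1, Fin.val_castSucc]
  let entry : ℝ[X] →ₗ[ℝ] ℝ := entryLinearMap ℝ ℝ x y ∘ₗ (aeval (S.A 1)).toLinearMap
  have hspan : Submodule.span ℝ (Set.range (v ∘ Fin.castSucc)) ≤ LinearMap.ker entry := by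
    rw [Submodule.span_le]
    rintro _ ⟨i, rfl⟩
    simp [entry, (hv _).2, hxy, Fin.castSucc_ne_last]
  rw [← span_range_eq_degreeLT _ hdeg] at hp
  exact hspan hp

theorem sum_eval_theta_mul_Q_last_eq_zero (v : Fin (d + 1) → ℝ[X])
    (hv : ∀ i, (v i).natDegree = (i : ℕ) ∧ aeval (S.A 1) (v i) = S.A i) {p : ℝ[X]}
    (hp : p ∈ degreeLT ℝ d) : ∑ j, p.eval (S.theta j) * S.Q j (Fin.last d) = 0 := by
  obtain ⟨x, y, hxy⟩ := S.exists_A_apply_eq_ite (Fin.last d)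
  have : Nonempty V := ⟨x⟩
  have hcard : (Fintype.card V : ℝ)⁻¹ ≠ 0 :=
    inv_ne_zero (Nat.cast_ne_zero.mpr Fintype.card_ne_zero)
  have h := S.aeval_A_one_apply_eq_zero_of_mem_degreeLT v hv hxy hp
  rw [S.aeval_A_one_apply_of_A_apply_eq_ite hxy] at h
  exact (mul_eq_zero.mp h).resolve_left hcard

end AssocScheme

theorem stmt4_general {V : Type*} [Fintype V] [DecidableEq V] {d : ℕ} (S : AssocScheme V d)
    (hθ : Function.Injective S.theta)
    (v : Fin (d + 1) → Polynomial ℝ)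
    (hv : ∀ i, (v i).natDegree = (i : ℕ) ∧ Polynomial.aeval (S.A 1) (v i) = S.A i) :
    ∀ i : Fin (d + 1), i ≠ 0 →
      (∏ j ∈ (Finset.univ.erase 0).erase i,
          (S.theta 0 - S.theta j) / (S.theta i - S.theta j)) = - S.Q i (Fin.last d) := by
  intro i hi
  set s := univ.erase (0 : Fin (d + 1))
  have hi_mem : i ∈ s := mem_erase.mpr ⟨hi, mem_univ i⟩
  have hθs : Set.InjOn S.theta s := hθ.injOn
  have hdeg : Lagrange.basis s S.theta i ∈ degreeLT ℝ d := by
    have : 0 < (i : ℕ) := Fin.pos_iff_ne_zero.mpr hi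
    rw [mem_degreeLT, Lagrange.degree_basis hθs hi_mem, card_erase_of_mem (mem_univ _),
      card_univ, Fintype.card_fin]
    exact_mod_cast (by omega : d + 1 - 1 - 1 < d)
  have hsum := S.sum_eval_theta_mul_Q_last_eq_zero v hv hdeg
  rw [Fintype.sum_eq_add 0 i hi.symm fun k ⟨hk0, hki⟩ => by
      rw [Lagrange.eval_basis_of_ne hki.symm (mem_erase.mpr ⟨hk0, mem_univ k⟩), zero_mul],
    Lagrange.eval_basis_self hθs hi_mem, S.Q_zero, Lagrange.eval_basis] at hsum
  linarith

/-- If `S` is P-polynomial with respect to the ordering `A 0, A 1, …, A d` (witnessed by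
polynomials `v i` of degree `i` with `v i (A 1) = A i`) and the eigenvalues of `A 1` are
pairwise distinct, then for each `i ∈ {1,…,d}`,
`∏_{j=1, j≠i}^d (θ₀ − θ_j)/(θ_i − θ_j) = − Q_i(d)`. -/
theorem stmt4 {V : Type*} [Fintype V] [DecidableEq V] {d : ℕ} (S : AssocScheme V d)
    (hd : 1 ≤ d) (hθ : Function.Injective S.theta)
    (v : Fin (d + 1) → Polynomial ℝ)
    (hv : ∀ i, (v i).natDegree = (i : ℕ) ∧ Polynomial.aeval (S.A 1) (v i) = S.A i) :
    ∀ i : Fin (d + 1), i ≠ 0 →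
      (∏ j ∈ (Finset.univ.erase 0).erase i,
          (S.theta 0 - S.theta j) / (S.theta i - S.theta j)) = - S.Q i (Fin.last d) :=
  stmt4_general S hθ v hv
end

section
/- Let 𝔛 be a symmetric association scheme of class d with θ₀ distinct from θ₁,…,θ_d, and define N*_h as the set of indices j such that A_j appears in A₁^h but in no lower power A₁^l (0 ≤ l ≤ h−1). If N*_i is empty for some i, then N*_{i+1} is also empty. Consequently, if N*_d is nonempty then each N*_i (0 ≤ i ≤ d) is nonempty and hence a singleton. -/
open Matrix BigOperators

section Aux

namespace AssocScheme

variable {V : Type*} [Fintype V] [DecidableEq V] {d : ℕ} (S : AssocScheme V d)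

lemma A_nonneg (i : Fin (d+1)) (x y : V) : 0 ≤ S.A i x y := by
  rcases S.A_entries i x y with h | h <;> rw [h] <;> norm_num

lemma sum_A_apply (x y : V) : ∑ i, S.A i x y = 1 := by
  have := congrFun (congrFun S.A_sum x) y
  simpa [Matrix.sum_apply] using this

lemma A_disjoint {i j : Fin (d+1)} (hij : i ≠ j) (x y : V) :
    S.A i x y * S.A j x y = 0 := by
  rcases S.A_entries i x y with h | h
  · rw [h]; ring
  rcases S.A_entries j x y with h' | h'
  · rw [h']; ring
  exfalso
  have hsum := S.sum_A_apply x y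
  have hle : S.A i x y + S.A j x y ≤ ∑ k, S.A k x y := by
    have : ∑ k ∈ ({i, j} : Finset (Fin (d+1))), S.A k x y ≤ ∑ k, S.A k x y :=
      Finset.sum_le_sum_of_subset_of_nonneg (Finset.subset_univ _)
        (fun k _ _ => S.A_nonneg k x y)
    rwa [Finset.sum_pair hij] at this
  rw [hsum, h, h'] at hle
  linarith

lemma exists_one_entry (j : Fin (d+1)) : ∃ x y, S.A j x y = 1 := by
  by_contra h
  push_neg at h
  apply S.A_ne j
  ext x y
  rcases S.A_entries j x y with h' | h'
  · simpa using h'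
  · exact absurd h' (h x y)

lemma rep_coeff {c : Fin (d+1) → ℝ} {M : Matrix V V ℝ}
    (hM : M = ∑ k, c k • S.A k) {j : Fin (d+1)} {x y : V} (hxy : S.A j x y = 1) :
    M x y = c j := by
  have : M x y = ∑ k, c k * S.A k x y := by
    rw [hM]; simp [Matrix.sum_apply]
  rw [this]
  rw [Finset.sum_eq_single j]
  · rw [hxy, mul_one]
  · intro k _ hk
    have := S.A_disjoint hk x y
    rw [hxy, mul_one] at this
    rw [this, mul_zero]
  · simp

lemma rep_hadamard {c : Fin (d+1) → ℝ} {M : Matrix V V ℝ}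
    (hM : M = ∑ k, c k • S.A k) (j : Fin (d+1)) :
    Matrix.hadamard M (S.A j) = c j • S.A j := by
  ext x y
  simp only [Matrix.hadamard_apply, Matrix.smul_apply, smul_eq_mul]
  rw [hM]
  simp only [Matrix.sum_apply, Matrix.smul_apply, smul_eq_mul, Finset.sum_mul]
  rw [Finset.sum_eq_single j]
  · rcases S.A_entries j x y with h | h <;> rw [h] <;> ring
  · intro k _ hk
    rw [mul_assoc, S.A_disjoint hk x y, mul_zero]
  · simp

lemma appears_iff {c : Fin (d+1) → ℝ} {M : Matrix V V ℝ}
    (hM : M = ∑ k, c k • S.A k) (j : Fin (d+1)) :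
    S.Appears M j ↔ c j ≠ 0 := by
  constructor
  · rintro ⟨α, hα, hMA⟩
    rw [S.rep_hadamard hM j] at hMA
    have : (c j - α) • S.A j = 0 := by
      rw [sub_smul, hMA, sub_self]
    rcases smul_eq_zero.mp this with h | h
    · intro hc; rw [sub_eq_zero] at h; exact hα (h ▸ hc)
    · exact absurd h (S.A_ne j)
  · intro hc
    exact ⟨c j, hc, S.rep_hadamard hM j⟩

noncomputable def pcoef (k j : Fin (d+1)) : ℝ := (S.A_mul k 1).choose j

lemma pcoef_spec (k : Fin (d+1)) : S.A k * S.A 1 = ∑ j, S.pcoef k j • S.A j :=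
  (S.A_mul k 1).choose_spec

lemma pcoef_nonneg (k j : Fin (d+1)) : 0 ≤ S.pcoef k j := by
  obtain ⟨x, y, hxy⟩ := S.exists_one_entry j
  have := S.rep_coeff (S.pcoef_spec k) hxy
  rw [← this, Matrix.mul_apply]
  exact Finset.sum_nonneg fun z _ => mul_nonneg (S.A_nonneg _ _ _) (S.A_nonneg _ _ _)

noncomputable def cpow (T : AssocScheme V d) : ℕ → Fin (d+1) → ℝ
  | 0 => fun k => if k = 0 then 1 else 0
  | (l+1) => fun j => ∑ k, cpow T l k * T.pcoef k j

lemma cpow_spec : ∀ h : ℕ, S.A 1 ^ h = ∑ k, S.cpow h k • S.A k := by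
  intro h
  induction h with
  | zero =>
    rw [pow_zero, ← S.A_zero]
    simp [cpow]
  | succ l ih =>
    rw [pow_succ, ih, Finset.sum_mul]
    have : ∀ k : Fin (d+1), (S.cpow l k • S.A k) * S.A 1
        = ∑ j, (S.cpow l k * S.pcoef k j) • S.A j := by
      intro k
      rw [Matrix.smul_mul, S.pcoef_spec k, Finset.smul_sum]
      simp [smul_smul]
    rw [Finset.sum_congr rfl fun k _ => this k, Finset.sum_comm]
    simp only [cpow, Finset.sum_smul]

lemma cpow_nonneg : ∀ (h : ℕ) (k : Fin (d+1)), 0 ≤ S.cpow h k := by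
  intro h
  induction h with
  | zero => intro k; simp only [cpow]; split <;> norm_num
  | succ l ih =>
    intro j
    exact Finset.sum_nonneg fun k _ => mul_nonneg (ih k) (S.pcoef_nonneg k j)

lemma appears_pow_iff (h : ℕ) (j : Fin (d+1)) :
    S.Appears (S.A 1 ^ h) j ↔ S.cpow h j ≠ 0 :=
  S.appears_iff (S.cpow_spec h) j


lemma smulE_mul (b c : Fin (d+1) → ℝ) :
    (∑ k, b k • S.E k) * (∑ k, c k • S.E k) = ∑ k, (b k * c k) • S.E k := by
  rw [Finset.sum_mul_sum]
  have : ∀ k m : Fin (d+1), (b k • S.E k) * (c m • S.E m)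
      = (b k * c m) • (if k = m then S.E k else 0) := by
    intro k m
    rw [Matrix.smul_mul, Matrix.mul_smul, S.E_mul k m, smul_smul]
  simp only [this]
  rw [Finset.sum_congr rfl fun k _ => ?_]
  rw [Finset.sum_eq_single k]
  · simp
  · intro m _ hm; simp [Ne.symm hm]
  · simp

lemma A1_sub_smul (a : Fin (d+1)) :
    S.A 1 - S.theta a • (1 : Matrix V V ℝ)
      = ∑ k, (S.theta k - S.theta a) • S.E k := by
  have h1 : S.A 1 = ∑ k, S.theta k • S.E k := S.A_eq 1
  have h2 : (1 : Matrix V V ℝ) = ∑ k, S.E k := S.E_sum.symm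
  rw [h1]
  conv_lhs => rw [h2]
  rw [Finset.smul_sum, ← Finset.sum_sub_distrib]
  exact Finset.sum_congr rfl fun k _ => by rw [sub_smul]

lemma aeval_prod_theta (s : Finset (Fin (d+1))) :
    Polynomial.aeval (S.A 1) (∏ j ∈ s, (Polynomial.X - Polynomial.C (S.theta j)))
      = ∑ k, (∏ j ∈ s, (S.theta k - S.theta j)) • S.E k := by
  induction s using Finset.induction with
  | empty => simp [S.E_sum]
  | @insert a s ha ih =>
    rw [Finset.prod_insert ha, _root_.map_mul, ih]
    have h1 : Polynomial.aeval (S.A 1) (Polynomial.X - Polynomial.C (S.theta a))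
        = ∑ k, (S.theta k - S.theta a) • S.E k := by
      rw [map_sub, Polynomial.aeval_X, Polynomial.aeval_C,
        Algebra.algebraMap_eq_smul_one, S.A1_sub_smul a]
    rw [h1, S.smulE_mul]
    exact Finset.sum_congr rfl fun k _ => by rw [Finset.prod_insert ha]

lemma nonempty_V (T : AssocScheme V d) : Nonempty V := by
  by_contra h
  exact T.A_ne 0 (by ext x y; exact absurd ⟨x⟩ h)

lemma exists_appears (hθ : ∀ j : Fin (d + 1), j ≠ 0 → S.theta j ≠ S.theta 0)
    (j : Fin (d+1)) : ∃ h, h ≤ d ∧ S.Appears (S.A 1 ^ h) j := by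
  classical
  set f : Polynomial ℝ :=
    ∏ j ∈ Finset.univ.erase 0, (Polynomial.X - Polynomial.C (S.theta j)) with hf
  have hdeg : f.natDegree = d := by
    rw [hf, Polynomial.natDegree_prod _ _ fun i _ => Polynomial.X_sub_C_ne_zero _]
    simp only [Polynomial.natDegree_X_sub_C]
    rw [Finset.sum_const, Finset.card_erase_of_mem (Finset.mem_univ _),
      Finset.card_univ, Fintype.card_fin]
    simp
  have haeval : Polynomial.aeval (S.A 1) f
      = (∏ j ∈ Finset.univ.erase 0, (S.theta 0 - S.theta j)) • S.E 0 := by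
    rw [hf, S.aeval_prod_theta]
    rw [Finset.sum_eq_single 0]
    · intro k _ hk
      have h0 : (∏ j ∈ Finset.univ.erase 0, (S.theta k - S.theta j)) = 0 :=
        Finset.prod_eq_zero (Finset.mem_erase.mpr ⟨hk, Finset.mem_univ k⟩) (sub_self _)
      rw [h0, zero_smul]
    · simp
  have hexp : Polynomial.aeval (S.A 1) f
      = ∑ h ∈ Finset.range (d+1), f.coeff h • S.A 1 ^ h :=
    Polynomial.aeval_eq_sum_range' (by rw [hdeg]; omega) (S.A 1)
  obtain ⟨x, y, hxy⟩ := S.exists_one_entry j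
  have hgxy : (Polynomial.aeval (S.A 1) f) x y ≠ 0 := by
    rw [haeval]
    have hc : (∏ j ∈ Finset.univ.erase 0, (S.theta 0 - S.theta j)) ≠ 0 := by
      apply Finset.prod_ne_zero_iff.mpr
      intro a ha
      exact sub_ne_zero_of_ne (Ne.symm (hθ a (Finset.mem_erase.mp ha).1))
    have hn : (Fintype.card V : ℝ) ≠ 0 := by
      have := S.nonempty_V
      simp [Fintype.card_ne_zero]
    rw [S.E_zero]
    simp only [Matrix.smul_apply, Matrix.of_apply, smul_eq_mul, mul_one]
    exact mul_ne_zero hc (inv_ne_zero hn)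
  rw [hexp] at hgxy
  have hrw : ∀ h ∈ Finset.range (d+1),
      (f.coeff h • S.A 1 ^ h) x y = f.coeff h * S.cpow h j := by
    intro h _
    rw [Matrix.smul_apply, smul_eq_mul, S.rep_coeff (S.cpow_spec h) hxy]
  have hsum : ∑ h ∈ Finset.range (d+1), f.coeff h * S.cpow h j ≠ 0 := by
    intro h0
    exact hgxy (by rw [Matrix.sum_apply, Finset.sum_congr rfl hrw, h0])
  obtain ⟨h, hh, hne⟩ := Finset.exists_ne_zero_of_sum_ne_zero hsum
  refine ⟨h, by simp at hh; omega, (S.appears_pow_iff h j).mpr ?_⟩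
  exact fun hc => hne (by rw [hc, mul_zero])

end AssocScheme

end Aux

/-- If `θ₀` is distinct from `θ₁,…,θ_d`, then `N*_i = ∅` implies `N*_{i+1} = ∅`;
consequently if `N*_d ≠ ∅`, then every `N*_i` (`i ≤ d`) is a singleton. -/
theorem stmt8 {V : Type*} [Fintype V] [DecidableEq V] {d : ℕ} (S : AssocScheme V d)
    (hd : 1 ≤ d) (hθ : ∀ j : Fin (d + 1), j ≠ 0 → S.theta j ≠ S.theta 0) :
    (∀ i : ℕ, S.Nstar i = ∅ → S.Nstar (i + 1) = ∅) ∧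
      (S.Nstar d ≠ ∅ → ∀ i : ℕ, i ≤ d → ∃ j : Fin (d + 1), S.Nstar i = {j}) := by
  classical
  have part1 : ∀ i : ℕ, S.Nstar i = ∅ → S.Nstar (i + 1) = ∅ := by
    intro i hi
    rw [Set.eq_empty_iff_forall_notMem] at hi ⊢
    rintro j ⟨happ, hnot⟩
    rw [S.appears_pow_iff] at happ
    have hstep : S.cpow (i+1) j = ∑ k, S.cpow i k * S.pcoef k j := rfl
    rw [hstep] at happ
    obtain ⟨k, -, hk⟩ := Finset.exists_ne_zero_of_sum_ne_zero happ
    have hck : S.cpow i k ≠ 0 := fun h => hk (by rw [h, zero_mul])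
    have hpk : S.pcoef k j ≠ 0 := fun h => hk (by rw [h, mul_zero])
    have hkapp : S.Appears (S.A 1 ^ i) k := (S.appears_pow_iff i k).mpr hck
    have hex : ∃ l < i, S.Appears (S.A 1 ^ l) k := by
      by_contra h
      push_neg at h
      exact hi k ⟨hkapp, h⟩
    obtain ⟨l, hl, hla⟩ := hex
    rw [S.appears_pow_iff] at hla
    have hpos : 0 < S.cpow (l+1) j := by
      have h1 : S.cpow l k * S.pcoef k j ≤ ∑ m, S.cpow l m * S.pcoef m j :=
        Finset.single_le_sum
          (fun m _ => mul_nonneg (S.cpow_nonneg l m) (S.pcoef_nonneg m j))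
          (Finset.mem_univ k)
      have h2 : 0 < S.cpow l k * S.pcoef k j :=
        lt_of_le_of_ne (mul_nonneg (S.cpow_nonneg l k) (S.pcoef_nonneg k j))
          (Ne.symm (mul_ne_zero hla hpk))
      have h3 : S.cpow (l+1) j = ∑ m, S.cpow l m * S.pcoef m j := rfl
      rw [h3]; linarith
    exact hnot (l+1) (by omega) ((S.appears_pow_iff _ j).mpr (ne_of_gt hpos))
  refine ⟨part1, ?_⟩
  intro hNd i hid
  have hchain : ∀ m i', S.Nstar i' = ∅ → S.Nstar (i' + m) = ∅ := by
    intro m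
    induction m with
    | zero => intro i' h; exact h
    | succ n ih => intro i' h; exact part1 (i'+n) (ih i' h)
  have hne : ∀ i' : ℕ, i' ≤ d → S.Nstar i' ≠ ∅ := by
    intro i' hi' h
    exact hNd (by have := hchain (d - i') i' h; rwa [Nat.add_sub_cancel' hi'] at this)
  have hex : ∀ j : Fin (d+1), ∃ h, S.Appears (S.A 1 ^ h) j := fun j =>
    (S.exists_appears hθ j).imp fun h hh => hh.2
  let F : Fin (d+1) → Fin (d+1) := fun j =>
    ⟨Nat.find (hex j), by
      obtain ⟨h, hhd, hha⟩ := S.exists_appears hθ j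
      have := Nat.find_min' (hex j) hha
      omega⟩
  have memF : ∀ (j : Fin (d+1)) (i' : ℕ), j ∈ S.Nstar i' ↔ Nat.find (hex j) = i' := by
    intro j i'
    constructor
    · rintro ⟨h1, h2⟩
      exact (Nat.find_eq_iff (hex j)).mpr ⟨h1, fun l hl => h2 l hl⟩
    · intro h
      exact ⟨h ▸ Nat.find_spec (hex j), fun l hl => Nat.find_min (hex j) (h ▸ hl)⟩
  have hsurj : Function.Surjective F := by
    intro i'
    have h : S.Nstar (i' : ℕ) ≠ ∅ := hne i' (by have := i'.isLt; omega)
    obtain ⟨j, hj⟩ := Set.nonempty_iff_ne_empty.mpr h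
    exact ⟨j, Fin.ext (by simpa [F] using (memF j i').mp hj)⟩
  have hinj : Function.Injective F := Finite.injective_iff_surjective.mpr hsurj
  obtain ⟨j, hj⟩ := Set.nonempty_iff_ne_empty.mpr (hne i hid)
  refine ⟨j, ?_⟩
  ext j'
  simp only [Set.mem_singleton_iff]
  constructor
  · intro hj'
    apply hinj
    apply Fin.ext
    show Nat.find (hex j') = Nat.find (hex j)
    rw [(memF j' i).mp hj', (memF j i).mp hj]
  · rintro rfl; exact hj
end

section
/- Let 𝔛 be a symmetric association scheme of class d such that θ₀ is distinct from θ₁,…,θ_d. Then 𝔛 is a P-polynomial scheme with respect to A₁ (for some ordering of the relations) if and only if ⋃_{h=0}^{d−1} N*_h ≠ {0,1,…,d}, where N*_h is the set of indices j such that A_j appears in A₁^h but in no lower power of A₁. -/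
open Matrix BigOperators

open Matrix BigOperators Polynomial Finset

namespace Aux
open AssocScheme
variable {V : Type*} [Fintype V] [DecidableEq V] {d : ℕ} (S : AssocScheme V d)

lemma entry_nonneg (i) (x y : V) : 0 ≤ S.A i x y := by
  rcases S.A_entries i x y with h | h <;> simp [h]

lemma exists_entry_one (i) : ∃ x y, S.A i x y = 1 := by
  by_contra h; push_neg at h
  apply S.A_ne i
  ext x y
  rcases S.A_entries i x y with h0 | h1
  · simpa using h0
  · exact absurd h1 (h x y)

lemma sum_entry (x y : V) : ∑ k, S.A k x y = 1 := by
  have := congrFun (congrFun S.A_sum x) y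
  simpa [Matrix.sum_apply] using this

lemma entry_mul_zero {i j : Fin (d+1)} (hij : i ≠ j) (x y : V) :
    S.A i x y * S.A j x y = 0 := by
  rcases S.A_entries i x y with h0 | h1
  · simp [h0]
  rcases S.A_entries j x y with h0 | h1'
  · simp [h0]
  exfalso
  have hsum := sum_entry S x y
  have hle : S.A i x y + S.A j x y ≤ ∑ k, S.A k x y := by
    have := Finset.sum_le_sum_of_subset_of_nonneg
      (Finset.subset_univ ({i, j} : Finset (Fin (d+1))))
      (fun k _ _ => entry_nonneg S k x y)
    simpa [Finset.sum_pair hij] using this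
  rw [hsum, h1, h1'] at hle
  linarith

lemma smul_cancel {j : Fin (d+1)} {a b : ℝ} (h : a • S.A j = b • S.A j) : a = b := by
  obtain ⟨x, y, hxy⟩ := exists_entry_one S j
  have := congrFun (congrFun h x) y
  simpa [Matrix.smul_apply, hxy] using this

lemma hadamard_extract (p : Fin (d+1) → ℝ) (j : Fin (d+1)) :
    Matrix.hadamard (∑ k, p k • S.A k) (S.A j) = p j • S.A j := by
  ext x y
  simp only [Matrix.hadamard_apply, Matrix.sum_apply, Matrix.smul_apply, smul_eq_mul]
  rw [Finset.sum_mul]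
  rw [Finset.sum_eq_single j]
  · rcases S.A_entries j x y with h0 | h1
    · simp [h0]
    · simp [h1]
  · intro k _ hk
    rw [mul_assoc, entry_mul_zero S hk, mul_zero]
  · simp

end Aux

namespace Aux
variable {V : Type*} [Fintype V] [DecidableEq V] {d : ℕ} (S : AssocScheme V d)

/-- coefficients of `A 1 * A m` in the basis of adjacency matrices -/
noncomputable def bcoef (m j : Fin (d+1)) : ℝ := Classical.choose (S.A_mul 1 m) j

lemma bcoef_spec (m : Fin (d+1)) : S.A 1 * S.A m = ∑ k, bcoef S m k • S.A k :=
  Classical.choose_spec (S.A_mul 1 m)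

lemma mul_entry_nonneg (M N : Matrix V V ℝ) (hM : ∀ x y, 0 ≤ M x y)
    (hN : ∀ x y, 0 ≤ N x y) (x y : V) : 0 ≤ (M * N) x y := by
  rw [Matrix.mul_apply]
  exact Finset.sum_nonneg fun z _ => mul_nonneg (hM x z) (hN z y)

lemma bcoef_nonneg (m j : Fin (d+1)) : 0 ≤ bcoef S m j := by
  obtain ⟨x, y, hxy⟩ := exists_entry_one S j
  have h := congrFun (congrFun (hadamard_extract S (bcoef S m) j) x) y
  rw [← bcoef_spec S m] at h
  simp only [Matrix.hadamard_apply, Matrix.smul_apply, smul_eq_mul, hxy, mul_one] at h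
  rw [← h]
  exact mul_entry_nonneg _ _ (entry_nonneg S 1) (entry_nonneg S m) x y

noncomputable def ccoef : ℕ → Fin (d+1) → ℝ
  | 0 => fun j => if j = 0 then 1 else 0
  | (h+1) => fun j => ∑ m, ccoef h m * bcoef S m j

lemma pow_eq (h : ℕ) : S.A 1 ^ h = ∑ j, ccoef S h j • S.A j := by
  induction h with
  | zero =>
    rw [pow_zero, ← S.A_zero]
    rw [Finset.sum_eq_single 0]
    · simp [ccoef]
    · intro k _ hk; simp [ccoef, hk]
    · simp
  | succ h ih =>
    rw [pow_succ', ih, Finset.mul_sum]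
    simp_rw [Matrix.mul_smul, bcoef_spec S, Finset.smul_sum]
    rw [Finset.sum_comm]
    refine Finset.sum_congr rfl fun j _ => ?_
    simp only [ccoef, Finset.sum_smul, smul_smul]

lemma ccoef_nonneg (h : ℕ) (j : Fin (d+1)) : 0 ≤ ccoef S h j := by
  induction h generalizing j with
  | zero => by_cases hj : j = 0 <;> simp [ccoef, hj]
  | succ h ih =>
    exact Finset.sum_nonneg fun m _ => mul_nonneg (ih m) (bcoef_nonneg S m j)

lemma appears_iff (h : ℕ) (j : Fin (d+1)) :
    S.Appears (S.A 1 ^ h) j ↔ ccoef S h j ≠ 0 := by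
  constructor
  · rintro ⟨α, hα, hval⟩
    rw [pow_eq, hadamard_extract] at hval
    intro hc
    rw [hc] at hval
    exact absurd (smul_cancel S hval.symm) hα
  · intro hc
    exact ⟨ccoef S h j, hc, by rw [pow_eq, hadamard_extract]⟩

lemma ccoef_one (j : Fin (d+1)) : ccoef S 1 j = if j = 1 then 1 else 0 := by
  have h1 : S.A 1 ^ 1 = ∑ k, (fun k => if k = (1:Fin (d+1)) then (1:ℝ) else 0) k • S.A k := by
    rw [pow_one, Finset.sum_eq_single (1 : Fin (d+1))]
    · simp
    · intro k _ hk; simp [hk]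
    · simp
  have h2 := pow_eq S 1
  rw [h1] at h2
  have := congrArg (fun M => Matrix.hadamard M (S.A j)) h2
  simp only [hadamard_extract] at this
  exact (smul_cancel S this).symm

end Aux

namespace Aux
open Polynomial
variable {V : Type*} [Fintype V] [DecidableEq V] {d : ℕ} (S : AssocScheme V d)

include S in
lemma nonempty_V : Nonempty V := by
  by_contra h
  rw [not_nonempty_iff] at h
  exact S.A_ne 0 (Subsingleton.elim _ _)

lemma pow_spectral (n : ℕ) : S.A 1 ^ n = ∑ j, (S.theta j)^n • S.E j := by
  induction n with
  | zero => simp [S.E_sum]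
  | succ n ih =>
    rw [pow_succ, ih, S.A_eq 1, Finset.sum_mul_sum]
    rw [Finset.sum_comm]  -- maybe unneeded
    refine Finset.sum_congr rfl fun j _ => ?_
    rw [Finset.sum_eq_single j]
    · rw [smul_mul_smul_comm, S.E_mul j j, if_pos rfl, pow_succ]
      rfl
    · intro k _ hk
      rw [smul_mul_smul_comm, S.E_mul k j, if_neg hk, smul_zero]
    · simp

lemma aeval_spectral (p : Polynomial ℝ) :
    Polynomial.aeval (S.A 1) p = ∑ j, (p.eval (S.theta j)) • S.E j := by
  rw [Polynomial.aeval_eq_sum_range]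
  simp_rw [pow_spectral S, Finset.smul_sum]
  rw [Finset.sum_comm]
  refine Finset.sum_congr rfl fun j _ => ?_
  rw [Polynomial.eval_eq_sum_range, Finset.sum_smul]
  simp [smul_smul]

lemma exists_J_poly (hθ : ∀ j : Fin (d + 1), j ≠ 0 → S.theta j ≠ S.theta 0) :
    ∃ g : Polynomial ℝ, g.natDegree ≤ d ∧
      Polynomial.aeval (S.A 1) g = Matrix.of (fun _ _ => (1:ℝ)) := by
  classical
  set T : Finset ℝ := (Finset.univ.erase (0 : Fin (d+1))).image S.theta with hT
  set g₀ : Polynomial ℝ := ∏ t ∈ T, (X - C t) with hg₀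
  have hdeg : g₀.natDegree ≤ d := by
    rw [hg₀, Polynomial.natDegree_prod]
    · simp only [Polynomial.natDegree_X_sub_C, Finset.sum_const, smul_eq_mul, mul_one]
      calc T.card ≤ (Finset.univ.erase (0 : Fin (d+1))).card := Finset.card_image_le
        _ = d := by simp [Finset.card_erase_of_mem]
    · intro t _; exact Polynomial.X_sub_C_ne_zero t
  have heval0 : g₀.eval (S.theta 0) ≠ 0 := by
    rw [hg₀, Polynomial.eval_prod]
    refine Finset.prod_ne_zero_iff.mpr fun t ht => ?_
    simp only [Polynomial.eval_sub, Polynomial.eval_X, Polynomial.eval_C]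
    obtain ⟨j, hj, rfl⟩ := Finset.mem_image.mp ht
    exact sub_ne_zero_of_ne (Ne.symm (hθ j (Finset.ne_of_mem_erase hj)))
  have hevalj : ∀ j : Fin (d+1), j ≠ 0 → g₀.eval (S.theta j) = 0 := by
    intro j hj
    rw [hg₀, Polynomial.eval_prod]
    refine Finset.prod_eq_zero (i := S.theta j) (Finset.mem_image_of_mem S.theta ?_) ?_
    · exact Finset.mem_erase.mpr ⟨hj, Finset.mem_univ j⟩
    · simp
  have hcard : (Fintype.card V : ℝ) ≠ 0 := by
    have := nonempty_V S
    exact_mod_cast Fintype.card_ne_zero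
  refine ⟨((Fintype.card V : ℝ) * (g₀.eval (S.theta 0))⁻¹) • g₀, ?_, ?_⟩
  · exact le_trans (Polynomial.natDegree_smul_le _ _) hdeg
  · rw [_root_.map_smul, aeval_spectral S]
    rw [Finset.sum_eq_single 0]
    · rw [S.E_zero, smul_smul, smul_smul]
      rw [show (Fintype.card V : ℝ) * (g₀.eval (S.theta 0))⁻¹ * g₀.eval (S.theta 0) * (Fintype.card V : ℝ)⁻¹ = 1 by
        field_simp]
      simp
    · intro j _ hj; rw [hevalj j hj, zero_smul]
    · simp

end Aux

namespace Aux
open Polynomial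
variable {V : Type*} [Fintype V] [DecidableEq V] {d : ℕ} (S : AssocScheme V d)

lemma span_poly (w : ℕ → Polynomial ℝ) (D : ℕ)
    (hw : ∀ n ≤ D, (w n).natDegree = n ∧ w n ≠ 0) :
    ∀ h ≤ D, ∀ p : Polynomial ℝ, p.natDegree ≤ h →
      ∃ b : ℕ → ℝ, p = ∑ i ∈ Finset.range (h+1), b i • w i := by
  intro h
  induction h with
  | zero =>
    intro _ p hp
    obtain ⟨hdeg0, hne0⟩ := hw 0 (Nat.zero_le _)
    obtain ⟨k, hk⟩ : ∃ k, w 0 = C k := ⟨_, eq_C_of_natDegree_le_zero hdeg0.le⟩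
    have hc : k ≠ 0 := by
      intro hc; apply hne0; rw [hk, hc, map_zero]
    refine ⟨fun _ => p.coeff 0 / k, ?_⟩
    rw [Finset.sum_range_one, hk, smul_C, smul_eq_mul, div_mul_cancel₀ _ hc]
    exact eq_C_of_natDegree_le_zero hp
  | succ h ih =>
    intro hhD p hp
    have hih := ih (le_trans (Nat.le_succ h) hhD)
    obtain ⟨hdeg, hne⟩ := hw (h+1) hhD
    set W : Polynomial ℝ := w (h+1) with hW
    have hL : W.leadingCoeff ≠ 0 := leadingCoeff_ne_zero.mpr hne
    have hwc : W.coeff (h+1) = W.leadingCoeff := by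
      rw [← hdeg, coeff_natDegree]
    set c : ℝ := p.coeff (h+1) / W.leadingCoeff with hcdef
    set q : Polynomial ℝ := p - c • W with hq
    have hqc : q.coeff (h+1) = 0 := by
      rw [hq, coeff_sub, coeff_smul, hcdef, hwc, smul_eq_mul,
        div_mul_cancel₀ _ hL, sub_self]
    have hqdeg : q.natDegree ≤ h := by
      rw [natDegree_le_iff_coeff_eq_zero]
      intro N hN
      rcases Nat.lt_or_ge (h+1) N with h1 | h2
      · rw [hq, coeff_sub, coeff_smul]
        rw [coeff_eq_zero_of_natDegree_lt (lt_of_le_of_lt hp h1)]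
        rw [coeff_eq_zero_of_natDegree_lt (by omega : W.natDegree < N)]
        simp
      · have : N = h + 1 := by omega
        rw [this]; exact hqc
    obtain ⟨b, hb⟩ := hih q hqdeg
    refine ⟨Function.update b (h+1) c, ?_⟩
    rw [Finset.sum_range_succ, Function.update_self]
    have heq : ∑ i ∈ Finset.range (h+1), Function.update b (h+1) c i • w i
        = ∑ i ∈ Finset.range (h+1), b i • w i := by
      refine Finset.sum_congr rfl fun i hi => ?_
      have hi' := Finset.mem_range.mp hi
      rw [Function.update_of_ne (by omega)]
    rw [heq, ← hb, hq, sub_add_cancel]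

end Aux

namespace Aux
open Polynomial
variable {V : Type*} [Fintype V] [DecidableEq V] {d : ℕ} (S : AssocScheme V d)

lemma hadamard_sum {ι : Type*} (s : Finset ι) (f : ι → Matrix V V ℝ) (N : Matrix V V ℝ) :
    Matrix.hadamard (∑ i ∈ s, f i) N = ∑ i ∈ s, Matrix.hadamard (f i) N := by
  ext x y
  simp [Matrix.hadamard_apply, Matrix.sum_apply, Finset.sum_mul]

lemma hadamard_smul_left (c : ℝ) (M N : Matrix V V ℝ) :
    Matrix.hadamard (c • M) N = c • Matrix.hadamard M N := by
  ext x y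
  simp [Matrix.hadamard_apply, mul_assoc]

lemma forward_dir (hpp : S.IsPPolyWrtA1) :
    (⋃ h ∈ Finset.range d, S.Nstar h) ≠ (Set.univ : Set (Fin (d + 1))) := by
  obtain ⟨ξ, hξ0, hξ1, v, hv⟩ := hpp
  set jD : Fin (d+1) := ξ ⟨d, Nat.lt_succ_self d⟩ with hjD
  intro hEq
  have hmem : jD ∈ ⋃ h ∈ Finset.range d, S.Nstar h := hEq ▸ Set.mem_univ jD
  rw [Set.mem_iUnion₂] at hmem
  obtain ⟨h, hh, hN⟩ := hmem
  have hhd : h < d := Finset.mem_range.mp hh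
  obtain ⟨α, hα, hval⟩ := hN.1
  set w : ℕ → Polynomial ℝ := fun n => if hn : n < d+1 then v ⟨n, hn⟩ else 0 with hwdef
  have hw : ∀ n ≤ d, (w n).natDegree = n ∧ w n ≠ 0 := by
    intro n hn
    have hn' : n < d + 1 := by omega
    constructor
    · simp only [hwdef, dif_pos hn']
      exact (hv ⟨n, hn'⟩).1
    · simp only [hwdef, dif_pos hn']
      intro h0
      apply S.A_ne (ξ ⟨n, hn'⟩)
      rw [← (hv ⟨n, hn'⟩).2, h0, map_zero]
  obtain ⟨b, hb⟩ := span_poly w d hw h (by omega) ((X : Polynomial ℝ)^h)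
    (by rw [natDegree_X_pow])
  have hzero : ∀ i ∈ Finset.range (h+1),
      Matrix.hadamard (Polynomial.aeval (S.A 1) (w i)) (S.A jD) = 0 := by
    intro i hi
    have hi' : i < h + 1 := Finset.mem_range.mp hi
    have hid : i < d + 1 := by omega
    have hne : ξ ⟨i, hid⟩ ≠ jD := by
      rw [hjD]
      intro hcon
      have := ξ.injective hcon
      have : i = d := by simpa [Fin.mk.injEq] using this
      omega
    simp only [hwdef, dif_pos hid]
    rw [(hv ⟨i, hid⟩).2]
    ext x y
    simp only [Matrix.hadamard_apply, Matrix.zero_apply]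
    exact entry_mul_zero S hne x y
  have hz : Matrix.hadamard (S.A 1 ^ h) (S.A jD) = 0 := by
    have hXpow : S.A 1 ^ h = Polynomial.aeval (S.A 1) ((X : Polynomial ℝ)^h) := by
      simp
    rw [hXpow, hb, map_sum, hadamard_sum]
    refine Finset.sum_eq_zero fun i hi => ?_
    rw [_root_.map_smul, hadamard_smul_left, hzero i hi, smul_zero]
  rw [hval] at hz
  exact S.A_ne jD ((smul_eq_zero.mp hz).resolve_left hα)

end Aux

namespace Aux
open Polynomial
variable {V : Type*} [Fintype V] [DecidableEq V] {d : ℕ} (S : AssocScheme V d)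

lemma ccoef_succ (h : ℕ) (j : Fin (d+1)) :
    ccoef S (h+1) j = ∑ m, ccoef S h m * bcoef S m j := rfl

open Classical in
/-- indices appearing in some power `≤ h` -/
noncomputable def Tset (h : ℕ) : Finset (Fin (d+1)) :=
  Finset.filter (fun j => ∃ l ≤ h, ccoef S l j ≠ 0) Finset.univ

lemma mem_Tset {h : ℕ} {j : Fin (d+1)} :
    j ∈ Tset S h ↔ ∃ l ≤ h, ccoef S l j ≠ 0 := by
  simp [Tset]

lemma Tset_mono {h h' : ℕ} (hh : h ≤ h') : Tset S h ⊆ Tset S h' := by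
  intro j hj
  obtain ⟨l, hl, hc⟩ := (mem_Tset S).mp hj
  exact (mem_Tset S).mpr ⟨l, le_trans hl hh, hc⟩

lemma mem_Tset_self {h : ℕ} {j : Fin (d+1)} (hc : ccoef S h j ≠ 0) : j ∈ Tset S h :=
  (mem_Tset S).mpr ⟨h, le_refl h, hc⟩

lemma ccoef_zero (j : Fin (d+1)) : ccoef S 0 j = if j = 0 then 1 else 0 := rfl

lemma Tset_zero : Tset S 0 = {0} := by
  ext j
  simp only [mem_Tset, Finset.mem_singleton, Nat.le_zero]
  constructor
  · rintro ⟨l, rfl, hc⟩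
    rw [ccoef_zero] at hc
    by_contra hj; simp [hj] at hc
  · rintro rfl
    exact ⟨0, rfl, by rw [ccoef_zero]; simp⟩

lemma step_mem {h : ℕ} {j : Fin (d+1)} (hc : ccoef S (h+1) j ≠ 0) :
    ∃ m, ccoef S h m ≠ 0 ∧ bcoef S m j ≠ 0 := by
  by_contra hall
  push_neg at hall
  apply hc
  rw [ccoef_succ]
  refine Finset.sum_eq_zero fun m _ => ?_
  by_cases hm : ccoef S h m = 0
  · rw [hm, zero_mul]
  · rw [hall m hm, mul_zero]

lemma step_mem_rev {h : ℕ} {m j : Fin (d+1)} (hc : ccoef S h m ≠ 0)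
    (hb : bcoef S m j ≠ 0) : ccoef S (h+1) j ≠ 0 := by
  have hpos : 0 < ccoef S h m * bcoef S m j :=
    mul_pos (lt_of_le_of_ne (ccoef_nonneg S h m) (Ne.symm hc))
      (lt_of_le_of_ne (bcoef_nonneg S m j) (Ne.symm hb))
  have hle : ccoef S h m * bcoef S m j ≤ ccoef S (h+1) j := by
    rw [ccoef_succ]
    exact Finset.single_le_sum
      (fun k _ => mul_nonneg (ccoef_nonneg S h k) (bcoef_nonneg S k j))
      (Finset.mem_univ m)
  exact ne_of_gt (lt_of_lt_of_le hpos hle)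

lemma stabilize {h : ℕ} (hsub : Tset S (h+1) ⊆ Tset S h) :
    ∀ l (j : Fin (d+1)), ccoef S l j ≠ 0 → j ∈ Tset S h := by
  intro l
  induction l using Nat.strong_induction_on with
  | _ l ih =>
    intro j hc
    rcases Nat.lt_or_ge l (h+2) with hl | hl
    · exact hsub ((mem_Tset S).mpr ⟨l, by omega, hc⟩)
    · obtain ⟨l', rfl⟩ : ∃ l'', l = l'' + 1 := ⟨l - 1, by omega⟩
      obtain ⟨m, hcm, hbm⟩ := step_mem S hc
      have hmem := ih l' (by omega) m hcm
      obtain ⟨l'', hl'', hcm'⟩ := (mem_Tset S).mp hmem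
      have : ccoef S (l''+1) j ≠ 0 := step_mem_rev S hcm' hbm
      exact hsub ((mem_Tset S).mpr ⟨l''+1, by omega, this⟩)

end Aux

namespace Aux
open Polynomial
variable {V : Type*} [Fintype V] [DecidableEq V] {d : ℕ} (S : AssocScheme V d)

lemma j0_low (j₀ : Fin (d+1)) (hj₀ : j₀ ∉ ⋃ h ∈ Finset.range d, S.Nstar h) :
    ∀ l < d, ccoef S l j₀ = 0 := by
  intro l
  induction l using Nat.strong_induction_on with
  | _ l ih =>
    intro hld
    by_contra hcl
    apply hj₀
    refine Set.mem_iUnion₂.mpr ⟨l, Finset.mem_range.mpr hld, ?_⟩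
    refine ⟨(appears_iff S l j₀).mpr hcl, fun l' hl' hApp => ?_⟩
    exact absurd ((appears_iff S l' j₀).mp hApp) (by rw [ih l' hl' (by omega)]; simp)

lemma j0_top (hθ : ∀ j : Fin (d + 1), j ≠ 0 → S.theta j ≠ S.theta 0)
    (j₀ : Fin (d+1)) (hlow : ∀ l < d, ccoef S l j₀ = 0) :
    ccoef S d j₀ ≠ 0 := by
  obtain ⟨g, hgdeg, hgval⟩ := exists_J_poly S hθ
  have hJ : Matrix.hadamard (Matrix.of fun _ _ => (1:ℝ)) (S.A j₀) = (1:ℝ) • S.A j₀ := by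
    ext x y
    simp [Matrix.hadamard_apply]
  have hexp : Polynomial.aeval (S.A 1) g = ∑ k ∈ Finset.range (d+1), g.coeff k • S.A 1 ^ k :=
    Polynomial.aeval_eq_sum_range' (p := g) (n := d+1) (by omega) (S.A 1)
  have hh : Matrix.hadamard (Polynomial.aeval (S.A 1) g) (S.A j₀)
      = (∑ k ∈ Finset.range (d+1), g.coeff k * ccoef S k j₀) • S.A j₀ := by
    rw [hexp, hadamard_sum]
    rw [Finset.sum_smul]
    refine Finset.sum_congr rfl fun k _ => ?_
    rw [hadamard_smul_left, pow_eq S k, hadamard_extract, smul_smul]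
  rw [hgval, hJ] at hh
  have h1 : (1:ℝ) = ∑ k ∈ Finset.range (d+1), g.coeff k * ccoef S k j₀ :=
    smul_cancel S hh
  rw [Finset.sum_range_succ] at h1
  rw [Finset.sum_eq_zero (fun k hk => by
    rw [hlow k (Finset.mem_range.mp hk), mul_zero])] at h1
  intro hc
  rw [hc, mul_zero, zero_add] at h1
  exact one_ne_zero h1

end Aux

namespace Aux
open Polynomial
variable {V : Type*} [Fintype V] [DecidableEq V] {d : ℕ} (S : AssocScheme V d)

lemma converse_dir (hd : 1 ≤ d)
    (hθ : ∀ j : Fin (d + 1), j ≠ 0 → S.theta j ≠ S.theta 0)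
    (hne : (⋃ h ∈ Finset.range d, S.Nstar h) ≠ (Set.univ : Set (Fin (d + 1)))) :
    S.IsPPolyWrtA1 := by
  classical
  obtain ⟨j₀, hj₀⟩ := (Set.ne_univ_iff_exists_notMem _).mp hne
  have hlow := j0_low S j₀ hj₀
  have hcd := j0_top S hθ j₀ hlow
  have hj₀T : ∀ h < d, j₀ ∉ Tset S h := by
    intro h hhd hmem
    obtain ⟨l, hl, hc⟩ := (mem_Tset S).mp hmem
    exact hc (hlow l (by omega))
  have hstrict : ∀ h < d, ¬ (Tset S (h+1) ⊆ Tset S h) := by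
    intro h hhd hsub
    exact hj₀T h hhd (stabilize S hsub d j₀ hcd)
  have hssub : ∀ h < d, Tset S h ⊂ Tset S (h+1) :=
    fun h hh => ⟨Tset_mono S (Nat.le_succ h), hstrict h hh⟩
  have hlb : ∀ h ≤ d, h + 1 ≤ (Tset S h).card := by
    intro h
    induction h with
    | zero =>
      intro _
      have h0 : (0 : Fin (d+1)) ∈ Tset S 0 := by rw [Tset_zero]; simp
      exact Finset.card_pos.mpr ⟨0, h0⟩
    | succ h ih =>
      intro hh
      have h1 := ih (by omega)
      have h2 := Finset.card_lt_card (hssub h (by omega))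
      omega
  have hchain : ∀ b < d, ∀ a ≤ b, (Tset S a).card + (b - a) ≤ (Tset S b).card := by
    intro b
    induction b with
    | zero => intro _ a ha; interval_cases a; simp
    | succ b ih =>
      intro hb a ha
      rcases Nat.eq_or_lt_of_le ha with rfl | ha'
      · simp
      · have h1 := ih (by omega) a (by omega)
        have h2 := Finset.card_lt_card (hssub b (by omega))
        omega
  have hub : ∀ h < d, (Tset S h).card ≤ h + 1 := by
    intro h hh
    have h1 := hchain (d-1) (by omega) h (by omega)
    have h2 : Tset S (d-1) ⊆ Finset.univ.erase j₀ := by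
      intro j hj
      refine Finset.mem_erase.mpr ⟨?_, Finset.mem_univ j⟩
      rintro rfl
      exact hj₀T (d-1) (by omega) hj
    have h3 := Finset.card_le_card h2
    rw [Finset.card_erase_of_mem (Finset.mem_univ _)] at h3
    simp only [Finset.card_univ, Fintype.card_fin] at h3
    omega
  have hcard : ∀ h < d, (Tset S h).card = h + 1 :=
    fun h hh => le_antisymm (hub h hh) (hlb h (by omega))
  have hsel : ∀ i, 1 ≤ i → i < d → ∃ x, x ∈ Tset S i ∧ x ∉ Tset S (i-1) := by
    intro i h1 h2
    have h3 := hstrict (i-1) (by omega)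
    rw [show i - 1 + 1 = i by omega] at h3
    obtain ⟨x, hx1, hx2⟩ := Finset.not_subset.mp h3
    exact ⟨x, hx1, hx2⟩
  set ξn : ℕ → Fin (d+1) := fun i =>
    if h : 1 ≤ i ∧ i < d then (hsel i h.1 h.2).choose else if i = 0 then 0 else j₀
    with hξn
  have hξ0 : ξn 0 = 0 := by simp [hξn]
  have hξd : ∀ i, i ≥ d → ξn i = j₀ := by
    intro i hi; simp only [hξn]; rw [dif_neg (by omega), if_neg (by omega)]
  have hmem1 : ∀ i, 1 ≤ i → i < d → ξn i ∈ Tset S i ∧ ξn i ∉ Tset S (i-1) := by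
    intro i h1 h2
    simp only [hξn]
    rw [dif_pos ⟨h1, h2⟩]
    exact (hsel i h1 h2).choose_spec
  have hmem : ∀ i < d, ξn i ∈ Tset S i := by
    intro i hi
    rcases Nat.eq_zero_or_pos i with rfl | h1
    · rw [hξ0, Tset_zero]; simp
    · exact (hmem1 i h1 hi).1
  have hsupp : ∀ i ≤ d, ccoef S i (ξn i) ≠ 0 := by
    intro i hi
    rcases Nat.eq_zero_or_pos i with rfl | h1
    · rw [hξ0, ccoef_zero]; simp
    rcases Nat.lt_or_ge i d with h2 | h2
    · obtain ⟨hin, hout⟩ := hmem1 i h1 h2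
      obtain ⟨l, hl, hc⟩ := (mem_Tset S).mp hin
      have hli : l = i := by
        by_contra hli
        exact hout ((mem_Tset S).mpr ⟨l, by omega, hc⟩)
      subst hli; exact hc
    · have hieq : i = d := by omega
      rw [hieq, hξd d (le_refl d)]
      exact hcd
  have hinj : ∀ i i', i < i' → i' ≤ d → ξn i ≠ ξn i' := by
    intro i i' hii hi'd heq
    rcases Nat.lt_or_ge i' d with h2 | h2
    · have h1 : 1 ≤ i' := by omega
      apply (hmem1 i' h1 h2).2
      rw [← heq]
      exact Tset_mono S (by omega : i ≤ i'-1) (hmem i (by omega))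
    · apply hj₀T (d-1) (by omega)
      have hmi := Tset_mono S (by omega : i ≤ d-1) (hmem i (by omega))
      rw [heq, hξd i' (by omega)] at hmi
      exact hmi
  have hcover : ∀ h ≤ d, ∀ j : Fin (d+1), ccoef S h j ≠ 0 → ∃ i ≤ h, ξn i = j := by
    intro h hh j hc
    rcases Nat.lt_or_ge h d with h2 | h2
    · have himg : (Finset.range (h+1)).image ξn ⊆ Tset S h := by
        intro x hx
        obtain ⟨n, hn, rfl⟩ := Finset.mem_image.mp hx
        have hn' := Finset.mem_range.mp hn
        exact Tset_mono S (by omega) (hmem n (by omega))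
      have hinjOn : Set.InjOn ξn (Finset.range (h+1)) := by
        intro a ha b hb hab
        simp only [Finset.coe_range, Set.mem_Iio] at ha hb
        by_contra hne'
        rcases Nat.lt_or_ge a b with hl | hl
        · exact hinj a b hl (by omega) hab
        · exact hinj b a (by omega) (by omega) hab.symm
      have hcardimg : ((Finset.range (h+1)).image ξn).card = h + 1 := by
        rw [Finset.card_image_of_injOn hinjOn, Finset.card_range]
      have heqT := Finset.eq_of_subset_of_card_le himg
        (by rw [hcardimg, hcard h h2])
      have hjmem : j ∈ (Finset.range (h+1)).image ξn := by
        rw [heqT]; exact mem_Tset_self S hc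
      obtain ⟨n, hn, hnj⟩ := Finset.mem_image.mp hjmem
      have hn' := Finset.mem_range.mp hn
      exact ⟨n, by omega, hnj⟩
    · have hinjOn : Set.InjOn ξn (Finset.range (d+1)) := by
        intro a ha b hb hab
        simp only [Finset.coe_range, Set.mem_Iio] at ha hb
        by_contra hne'
        rcases Nat.lt_or_ge a b with hl | hl
        · exact hinj a b hl (by omega) hab
        · exact hinj b a (by omega) (by omega) hab.symm
      have hcardimg : ((Finset.range (d+1)).image ξn).card = d + 1 := by
        rw [Finset.card_image_of_injOn hinjOn, Finset.card_range]
      have hall : (Finset.range (d+1)).image ξn = Finset.univ := by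
        apply Finset.eq_of_subset_of_card_le (Finset.subset_univ _)
        rw [Finset.card_univ, Fintype.card_fin, hcardimg]
      have hjmem : j ∈ (Finset.range (d+1)).image ξn := by
        rw [hall]; exact Finset.mem_univ j
      obtain ⟨n, hn, hnj⟩ := Finset.mem_image.mp hjmem
      have hn' := Finset.mem_range.mp hn
      exact ⟨n, by omega, hnj⟩
  have hinjFin : Function.Injective (fun i : Fin (d+1) => ξn i.val) := by
    intro a b hab
    by_contra hne'
    have hvne : a.val ≠ b.val := fun hv => hne' (Fin.ext hv)
    have hb' := b.isLt
    have ha' := a.isLt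
    rcases Nat.lt_or_ge a.val b.val with hl | hl
    · exact hinj a.val b.val hl (by omega) hab
    · exact hinj b.val a.val (by omega) (by omega) hab.symm
  set Ξ : Equiv.Perm (Fin (d+1)) :=
    Equiv.ofBijective _ ((Fintype.bijective_iff_injective_and_card _).mpr ⟨hinjFin, rfl⟩)
    with hΞ
  have hΞapp : ∀ i : Fin (d+1), Ξ i = ξn i.val := fun i => rfl
  have key : ∀ h ≤ d,
      S.A 1 ^ h = ∑ n ∈ Finset.range (h+1), ccoef S h (ξn n) • S.A (ξn n) := by
    intro h hh
    have e0 : ∑ j, ccoef S h j • S.A j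
        = ∑ i : Fin (d+1), ccoef S h (ξn i.val) • S.A (ξn i.val) :=
      (Equiv.sum_comp Ξ (fun j => ccoef S h j • S.A j)).symm
    have e1 : ∑ i : Fin (d+1), ccoef S h (ξn i.val) • S.A (ξn i.val)
        = ∑ n ∈ Finset.range (d+1), ccoef S h (ξn n) • S.A (ξn n) :=
      Fin.sum_univ_eq_sum_range (fun n => ccoef S h (ξn n) • S.A (ξn n)) (d+1)
    rw [pow_eq S h, e0, e1]
    refine (Finset.sum_subset (Finset.range_subset_range.mpr (by omega)) fun n hn hn' => ?_).symm
    have h1 := Finset.mem_range.mp hn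
    have h2 : ¬ n < h + 1 := fun hcc => hn' (Finset.mem_range.mpr hcc)
    have hz : ccoef S h (ξn n) = 0 := by
      by_contra hnz
      obtain ⟨i, hih, hieq⟩ := hcover h hh (ξn n) hnz
      exact hinj i n (by omega) (by omega) hieq
    rw [hz, zero_smul]
  have hvex : ∀ h, h ≤ d → ∃ vv : ℕ → Polynomial ℝ,
      ∀ i ≤ h, (vv i).natDegree = i ∧ Polynomial.aeval (S.A 1) (vv i) = S.A (ξn i) := by
    intro h
    induction h with
    | zero =>
      intro _
      refine ⟨fun _ => 1, fun i hi => ?_⟩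
      interval_cases i
      refine ⟨by simp, ?_⟩
      rw [hξ0, S.A_zero]; simp
    | succ h ih =>
      intro hh
      obtain ⟨vv, hvv⟩ := ih (by omega)
      set cN : ℝ := ccoef S (h+1) (ξn (h+1)) with hcN
      have hcN0 : cN ≠ 0 := hsupp (h+1) hh
      set inner : Polynomial ℝ :=
        (X : Polynomial ℝ)^(h+1) - ∑ n ∈ Finset.range (h+1), ccoef S (h+1) (ξn n) • vv n
        with hinner
      have hdegsum : (∑ n ∈ Finset.range (h+1), ccoef S (h+1) (ξn n) • vv n).natDegree ≤ h := by
        refine Polynomial.natDegree_sum_le_of_forall_le _ _ fun n hn => ?_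
        have hn' := Finset.mem_range.mp hn
        refine le_trans (Polynomial.natDegree_smul_le _ _) ?_
        rw [(hvv n (by omega)).1]; omega
      have hinnercoeff : inner.coeff (h+1) = 1 := by
        rw [hinner, Polynomial.coeff_sub, Polynomial.coeff_X_pow, if_pos rfl]
        rw [Polynomial.coeff_eq_zero_of_natDegree_lt (lt_of_le_of_lt hdegsum (by omega))]
        ring
      have hinnerdeg : inner.natDegree = h+1 := by
        refine le_antisymm ?_ ?_
        · rw [hinner]
          refine le_trans (Polynomial.natDegree_sub_le _ _) ?_
          exact max_le (by simp) (le_trans hdegsum (by omega))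
        · exact Polynomial.le_natDegree_of_ne_zero (by rw [hinnercoeff]; exact one_ne_zero)
      set nw : Polynomial ℝ := cN⁻¹ • inner with hnw
      have hnwdeg : nw.natDegree = h+1 := by
        refine le_antisymm (le_trans (Polynomial.natDegree_smul_le _ _) hinnerdeg.le) ?_
        refine Polynomial.le_natDegree_of_ne_zero ?_
        rw [hnw, Polynomial.coeff_smul, hinnercoeff, smul_eq_mul, mul_one]
        exact inv_ne_zero hcN0
      have hnwval : Polynomial.aeval (S.A 1) nw = S.A (ξn (h+1)) := by
        rw [hnw, _root_.map_smul, hinner, map_sub, map_pow, Polynomial.aeval_X, map_sum]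
        simp_rw [_root_.map_smul]
        rw [Finset.sum_congr rfl (fun n hn => by
          have hn' := Finset.mem_range.mp hn
          rw [(hvv n (by omega)).2])]
        rw [key (h+1) hh, Finset.sum_range_succ, add_sub_cancel_left]
        rw [smul_smul, inv_mul_cancel₀ hcN0, one_smul]
      refine ⟨Function.update vv (h+1) nw, fun i hi => ?_⟩
      rcases Nat.eq_or_lt_of_le hi with rfl | hi'
      · rw [Function.update_self]; exact ⟨hnwdeg, hnwval⟩
      · rw [Function.update_of_ne (show i ≠ h+1 by omega)]; exact hvv i (by omega)
  obtain ⟨vv, hvv⟩ := hvex d le_rfl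
  have hv1 : ((1 : Fin (d+1)) : ℕ) = 1 := by
    rw [Fin.val_one']; exact Nat.mod_eq_of_lt (by omega)
  have hΞ1 : Ξ 1 = 1 := by
    rw [hΞapp, hv1]
    have hp := hsupp 1 hd
    rw [ccoef_one] at hp
    by_contra hne'
    rw [if_neg hne'] at hp
    exact hp rfl
  have hΞ0 : Ξ 0 = 0 := by
    rw [hΞapp]
    exact hξ0
  refine ⟨Ξ, hΞ0, hΞ1, fun i => vv i.val, fun i => ?_⟩
  have hile : (i : ℕ) ≤ d := by have := i.isLt; omega
  refine ⟨(hvv i.val hile).1, ?_⟩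
  rw [hΞapp]
  exact (hvv i.val hile).2

end Aux

/-- Lemma 3.3: if `θ₀` is distinct from `θ₁,…,θ_d`, then `S` is P-polynomial with
respect to `A 1` iff `⋃_{h=0}^{d−1} N*_h ≠ {0,1,…,d}`. -/
theorem stmt9 {V : Type*} [Fintype V] [DecidableEq V] {d : ℕ} (S : AssocScheme V d)
    (hd : 1 ≤ d) (hθ : ∀ j : Fin (d + 1), j ≠ 0 → S.theta j ≠ S.theta 0) :
    S.IsPPolyWrtA1 ↔ (⋃ h ∈ Finset.range d, S.Nstar h) ≠ (Set.univ : Set (Fin (d + 1))) := by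
  constructor
  · exact Aux.forward_dir S
  · exact Aux.converse_dir S hd hθ
end
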